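/- Let (Ω, 𝒜, ℙ) be a probability space and X : Ω → ℝⁿ a random vector such that E[‖X‖^k] < ∞ for every positive integer k. Let Z ⊆ ℝ be a nonempty open interval and K : ℝⁿ × Z → ℝ be such that x ↦ K(x,z) is measurable for each z ∈ Z, and: (i) for every x ∈ ℝⁿ, z ↦ K(x,z) is continuous and strictly decreasing on Z; (ii) there exist a function L : Z → (0,∞) that is bounded on every compact subset of Z and an integer γ ≥ 1 such that |K(x,z)| ≤ L(z)(1 + ‖x‖^{2γ}) for all (x,z) ∈ ℝⁿ × Z; (iii) for every x ∈ ℝⁿ, inf_{z∈Z} K(x,z) < 0 < sup_{z∈Z} K(x,z). Then the function z ↦ E[K(X,z)] is continuous and strictly decreasing on Z, and there exists z ∈ Z such that E[K(X,z)] = 0. -/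
import Mathlib


open MeasureTheory

/-- A monotone sequence cofinal in a nonempty open set of reals. -/
lemma cofinal_seq (Z : Set ℝ) (hZopen : IsOpen Z) (hZne : Z.Nonempty) :
    ∃ w : ℕ → ℝ, (∀ k, w k ∈ Z) ∧ Monotone w ∧ ∀ z ∈ Z, ∃ k, z ≤ w k := by
  have hmain : ∃ u : ℕ → ℝ, (∀ k, u k ∈ Z) ∧ ∀ z ∈ Z, ∃ k, z ≤ u k := by
    by_cases hb : BddAbove Z
    · set b := sSup Z with hbdef
      have hbnot : b ∉ Z := by
        intro hbZ
        obtain ⟨ε, hε, hball⟩ := Metric.isOpen_iff.1 hZopen b hbZ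
        have hmem : b + ε/2 ∈ Z := by
          apply hball
          rw [Metric.mem_ball, Real.dist_eq]
          rw [abs_of_nonneg (by linarith)]
          linarith
        have := le_csSup hb hmem
        linarith
      have hsel : ∀ k : ℕ, ∃ z ∈ Z, b - 1/(k+1) < z := by
        intro k
        apply exists_lt_of_lt_csSup hZne
        have : (0:ℝ) < 1/(k+1) := by positivity
        linarith
      choose u hu hlt using hsel
      refine ⟨u, hu, fun z hz => ?_⟩
      have hzb : z < b := lt_of_le_of_ne (le_csSup hb hz) (fun h => hbnot (h ▸ hz))
      obtain ⟨k, hk⟩ := exists_nat_one_div_lt (show (0:ℝ) < b - z by linarith)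
      exact ⟨k, le_of_lt (lt_trans (by linarith) (hlt k))⟩
    · have hsel : ∀ k : ℕ, ∃ z ∈ Z, (k:ℝ) < z := by
        intro k
        by_contra h
        push_neg at h
        exact hb ⟨k, fun z hz => h z hz⟩
      choose u hu hlt using hsel
      exact ⟨u, hu, fun z hz => ⟨⌈z⌉₊, (Nat.le_ceil z).trans (hlt _).le⟩⟩
  obtain ⟨u, huZ, hucof⟩ := hmain
  refine ⟨fun k => (Finset.range (k+1)).sup' Finset.nonempty_range_add_one u, ?_, ?_, ?_⟩
  · intro k
    obtain ⟨j, hj, hje⟩ := Finset.exists_mem_eq_sup' (Finset.nonempty_range_add_one (n := k)) u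
    simp only []
    rw [hje]; exact huZ j
  · intro k l hkl
    exact Finset.sup'_mono u (Finset.range_subset_range.2 (by omega)) Finset.nonempty_range_add_one
  · intro z hz
    obtain ⟨k, hk⟩ := hucof z hz
    exact ⟨k, hk.trans (Finset.le_sup' u (Finset.self_mem_range_succ k))⟩

lemma aux_neg {Ω : Type*} [MeasureSpace Ω] [IsProbabilityMeasure (volume : Measure Ω)]
    {α : Type*} (X : Ω → α) (Z : Set ℝ) (hZopen : IsOpen Z) (hZne : Z.Nonempty)
    (K : α → ℝ → ℝ)
    (hint : ∀ z ∈ Z, Integrable (fun ω => K (X ω) z))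
    (hKanti : ∀ x, AntitoneOn (K x) Z)
    (hKneg : ∀ x, ∃ z ∈ Z, K x z < 0) :
    ∃ z ∈ Z, (∫ ω, K (X ω) z) < 0 := by
  obtain ⟨w, hwZ, hwmono, hwcof⟩ := cofinal_seq Z hZopen hZne
  set h : ℕ → Ω → ℝ := fun k ω => max (K (X ω) (w k)) (-1) with hhdef
  have hBint : ∀ k, Integrable (fun ω => |K (X ω) (w k)| + 1) := by
    intro k
    simpa using ((hint (w k) (hwZ k)).abs.add (integrable_const 1))
  have hhmeas : ∀ k, AEStronglyMeasurable (h k) volume := by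
    intro k
    exact ((hint (w k) (hwZ k)).1.aemeasurable.max aemeasurable_const).aestronglyMeasurable
  have habs : ∀ k ω, |h k ω| ≤ |K (X ω) (w k)| + 1 := by
    intro k ω
    rw [abs_le]
    constructor
    · have h1 := le_max_right (K (X ω) (w k)) (-1)
      have h2 := abs_nonneg (K (X ω) (w k))
      simp only [hhdef]; linarith
    · have h1 := le_abs_self (K (X ω) (w k))
      have h2 := abs_nonneg (K (X ω) (w k))
      simp only [hhdef]
      exact max_le (by linarith) (by linarith)
  have hhint : ∀ k, Integrable (h k) := by
    intro k
    refine Integrable.mono' (hBint k) (hhmeas k)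
      (Filter.Eventually.of_forall fun ω => ?_)
    rw [Real.norm_eq_abs]
    exact habs k ω
  have hanti : ∀ ω, Antitone fun k => h k ω := by
    intro ω k l hkl
    exact max_le_max (hKanti (X ω) (hwZ k) (hwZ l) (hwmono hkl)) le_rfl
  have hbdd : ∀ ω, BddBelow (Set.range fun k => h k ω) := by
    intro ω
    exact ⟨-1, by rintro y ⟨k, rfl⟩; exact le_max_right _ _⟩
  set g : Ω → ℝ := fun ω => ⨅ k, h k ω with hgdef
  have htend : ∀ ω, Filter.Tendsto (fun k => h k ω) Filter.atTop (nhds (g ω)) :=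
    fun ω => tendsto_atTop_ciInf (hanti ω) (hbdd ω)
  have hneginf : ∀ ω, g ω < 0 := by
    intro ω
    obtain ⟨z, hzZ, hzneg⟩ := hKneg (X ω)
    obtain ⟨k, hk⟩ := hwcof z hzZ
    have h1 : K (X ω) (w k) ≤ K (X ω) z := hKanti (X ω) hzZ (hwZ k) hk
    calc g ω ≤ h k ω := ciInf_le (hbdd ω) k
      _ < 0 := max_lt (h1.trans_lt hzneg) (by norm_num)
  have hlb : ∀ ω, -1 ≤ g ω := fun ω => le_ciInf fun k => le_max_right _ _
  have hmeasinf : AEStronglyMeasurable g volume :=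
    aestronglyMeasurable_of_tendsto_ae Filter.atTop (fun k => hhmeas k)
      (Filter.Eventually.of_forall htend)
  have hintinf : Integrable g := by
    refine Integrable.mono' (integrable_const 1) hmeasinf
      (Filter.Eventually.of_forall fun ω => ?_)
    rw [Real.norm_eq_abs, abs_le]
    exact ⟨hlb ω, by linarith [hneginf ω]⟩
  have hnegint : (∫ ω, g ω) < 0 := by
    have hp : 0 < ∫ ω, -g ω := by
      rw [integral_pos_iff_support_of_nonneg_ae]
      · have hsupp : Function.support (fun ω => -g ω) = Set.univ :=
          Set.eq_univ_of_forall fun ω => by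
            simp only [Function.mem_support]
            have := hneginf ω; intro hc; rw [neg_eq_zero] at hc; linarith
        rw [hsupp]
        simp
      · exact Filter.Eventually.of_forall fun ω => by have := hneginf ω; simp; linarith
      · exact hintinf.neg
    rw [integral_neg] at hp
    linarith
  have hbound : ∀ (k : ℕ), ∀ᵐ ω, ‖h k ω‖ ≤ |K (X ω) (w 0)| + 1 := by
    intro k
    refine Filter.Eventually.of_forall fun ω => ?_
    rw [Real.norm_eq_abs, abs_le]
    have hmono0 : h k ω ≤ h 0 ω := hanti ω (Nat.zero_le k)
    have h0b := habs 0 ω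
    rw [abs_le] at h0b
    constructor
    · have h1 := le_max_right (K (X ω) (w k)) (-1)
      have h2 := abs_nonneg (K (X ω) (w 0))
      simp only [hhdef]; linarith
    · exact le_trans hmono0 h0b.2
  have htendint : Filter.Tendsto (fun k => ∫ ω, h k ω) Filter.atTop (nhds (∫ ω, g ω)) := by
    exact tendsto_integral_of_dominated_convergence (fun ω => |K (X ω) (w 0)| + 1)
      (fun k => hhmeas k) (hBint 0) hbound (Filter.Eventually.of_forall htend)
  obtain ⟨k, hk⟩ := (htendint.eventually_lt_const hnegint).exists
  refine ⟨w k, hwZ k, lt_of_le_of_lt ?_ hk⟩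
  exact integral_mono (hint (w k) (hwZ k)) (hhint k) fun ω => le_max_left _ _

/-- Lemma 2.1 of the paper: the implicit equation `E[K(X, z)] = 0` has a root in `z`,
and `z ↦ E[K(X, z)]` is continuous and strictly decreasing on the open interval `Z`. -/
theorem stmt_0 {Ω : Type*} [MeasureSpace Ω] [IsProbabilityMeasure (volume : Measure Ω)]
    (n : ℕ) (X : Ω → EuclideanSpace ℝ (Fin n)) (hXmeas : Measurable X)
    (hmom : ∀ k : ℕ, 0 < k → Integrable fun ω => ‖X ω‖ ^ k)
    (Z : Set ℝ) (hZopen : IsOpen Z) (hZord : Z.OrdConnected) (hZne : Z.Nonempty)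
    (K : EuclideanSpace ℝ (Fin n) → ℝ → ℝ)
    (hKmeas : ∀ z ∈ Z, Measurable fun x => K x z)
    (hKcont : ∀ x, ContinuousOn (K x) Z)
    (hKanti : ∀ x, StrictAntiOn (K x) Z)
    (hKgrowth : ∃ L : ℝ → ℝ, (∀ z ∈ Z, 0 < L z) ∧
      (∀ s ⊆ Z, IsCompact s → ∃ M : ℝ, ∀ z ∈ s, L z ≤ M) ∧
      ∃ γ : ℕ, 1 ≤ γ ∧ ∀ x, ∀ z ∈ Z, |K x z| ≤ L z * (1 + ‖x‖ ^ (2 * γ)))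
    (hKneg : ∀ x, ∃ z ∈ Z, K x z < 0)
    (hKpos : ∀ x, ∃ z ∈ Z, 0 < K x z) :
    ContinuousOn (fun z => ∫ ω, K (X ω) z) Z ∧
    StrictAntiOn (fun z => ∫ ω, K (X ω) z) Z ∧
    ∃ z ∈ Z, (∫ ω, K (X ω) z) = 0 := by
  obtain ⟨L, hLpos, hLbdd, γ, hγpos, hKle⟩ := hKgrowth
  have hXmom : Integrable (fun ω => 1 + ‖X ω‖ ^ (2*γ)) := by
    simpa using ((integrable_const (1:ℝ)).add (hmom (2*γ) (by omega)))
  have hXnn : ∀ ω : Ω, (0:ℝ) ≤ 1 + ‖X ω‖ ^ (2*γ) := fun ω => by positivity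
  have hint : ∀ z ∈ Z, Integrable fun ω => K (X ω) z := by
    intro z hz
    refine Integrable.mono' (hXmom.const_mul (L z))
      (((hKmeas z hz).comp hXmeas).aestronglyMeasurable)
      (Filter.Eventually.of_forall fun ω => ?_)
    rw [Real.norm_eq_abs]
    exact hKle (X ω) z hz
  have hcont : ContinuousOn (fun z => ∫ ω, K (X ω) z) Z := by
    intro z₀ hz₀
    refine ContinuousAt.continuousWithinAt ?_
    obtain ⟨ε, hε, hball⟩ := Metric.isOpen_iff.1 hZopen z₀ hz₀
    have hIcc : Set.Icc (z₀ - ε/2) (z₀ + ε/2) ⊆ Z := by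
      intro y hy
      apply hball
      rw [Metric.mem_ball, Real.dist_eq]
      rw [abs_lt]
      constructor <;> [linarith [hy.1]; linarith [hy.2]]
    obtain ⟨M, hM⟩ := hLbdd _ hIcc isCompact_Icc
    apply continuousAt_of_dominated (bound := fun ω => M * (1 + ‖X ω‖ ^ (2*γ)))
    · filter_upwards [hZopen.mem_nhds hz₀] with z hz
      exact ((hKmeas z hz).comp hXmeas).aestronglyMeasurable
    · filter_upwards [Ioo_mem_nhds (show z₀ - ε/2 < z₀ by linarith)
        (show z₀ < z₀ + ε/2 by linarith)] with z hz
      have hzI : z ∈ Set.Icc (z₀ - ε/2) (z₀ + ε/2) := ⟨hz.1.le, hz.2.le⟩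
      refine Filter.Eventually.of_forall fun ω => ?_
      rw [Real.norm_eq_abs]
      calc |K (X ω) z| ≤ L z * (1 + ‖X ω‖ ^ (2*γ)) := hKle _ z (hIcc hzI)
        _ ≤ M * (1 + ‖X ω‖ ^ (2*γ)) :=
            mul_le_mul_of_nonneg_right (hM z hzI) (hXnn ω)
    · exact hXmom.const_mul M
    · exact Filter.Eventually.of_forall fun ω =>
        (hKcont (X ω)).continuousAt (hZopen.mem_nhds hz₀)
  have hanti : StrictAntiOn (fun z => ∫ ω, K (X ω) z) Z := by
    intro z₁ h₁ z₂ h₂ h12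
    have hsub : Integrable fun ω => K (X ω) z₁ - K (X ω) z₂ :=
      (hint z₁ h₁).sub (hint z₂ h₂)
    have hpos : 0 < ∫ ω, (K (X ω) z₁ - K (X ω) z₂) := by
      rw [integral_pos_iff_support_of_nonneg_ae]
      · have hsupp : Function.support (fun ω => K (X ω) z₁ - K (X ω) z₂) = Set.univ :=
          Set.eq_univ_of_forall fun ω =>
            sub_ne_zero.2 (ne_of_gt (hKanti (X ω) h₁ h₂ h12))
        rw [hsupp]
        simp
      · exact Filter.Eventually.of_forall fun ω =>
          sub_nonneg.2 (hKanti (X ω) h₁ h₂ h12).le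
      · exact hsub
    rw [integral_sub (hint z₁ h₁) (hint z₂ h₂)] at hpos
    simpa using hpos
  refine ⟨hcont, hanti, ?_⟩
  obtain ⟨z₂, hz₂Z, hz₂⟩ := aux_neg X Z hZopen hZne K hint
    (fun x => (hKanti x).antitoneOn) hKneg
  have hZ'open : IsOpen ((fun z : ℝ => -z) ⁻¹' Z) := hZopen.preimage continuous_neg
  have hZ'ne : ((fun z : ℝ => -z) ⁻¹' Z).Nonempty := by
    obtain ⟨a, ha⟩ := hZne
    exact ⟨-a, by simpa using ha⟩
  obtain ⟨z₁', hz₁'Z, hz₁'⟩ := aux_neg X ((fun z : ℝ => -z) ⁻¹' Z) hZ'open hZ'ne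
    (fun x z => -K x (-z))
    (fun z hz => (hint (-z) hz).neg)
    (fun x a ha b hb hab =>
      neg_le_neg ((hKanti x).antitoneOn hb ha (neg_le_neg hab)))
    (fun x => by
      obtain ⟨z, hz, hpos⟩ := hKpos x
      exact ⟨-z, by simpa using hz, by simpa using hpos⟩)
  have hz₁Z : -z₁' ∈ Z := hz₁'Z
  have hz₁ : 0 < ∫ ω, K (X ω) (-z₁') := by
    rw [integral_neg] at hz₁'
    linarith
  have h12 : -z₁' < z₂ := by
    rcases lt_trichotomy (-z₁') z₂ with h | h | h
    · exact h
    · exfalso; rw [h] at hz₁; linarith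
    · exfalso
      have := hanti hz₂Z hz₁Z h
      simp only at this
      linarith
  have hsub : Set.Icc (-z₁') z₂ ⊆ Z := hZord.out hz₁Z hz₂Z
  have hIVT := intermediate_value_Icc' h12.le (hcont.mono hsub)
  obtain ⟨z, hzI, hz0⟩ := hIVT ⟨hz₂.le, hz₁.le⟩
  exact ⟨z, hsub hzI, hz0⟩
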